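/- arXiv:2511.00958 — 5 statements merged into one kernel-verified Lean document; each statement's English description precedes it below -/
import Mathlib

section
/- For x ∈ ℝⁿ with mean μ = (1/n)∑ x_i and centered vector y = x - μ·1, the Jacobian of layer normalization LN(x, ε) = y/sqrt(σ_n² + ε), where σ_n² = (1/n)‖y‖₂², equals (1/sqrt(σ_n² + ε)) · (I - y yᵀ/(‖y‖₂² + nε)) · (I - (1/n)J), where J is the n×n all-ones matrix and I is the identity. -/
open Finset ContinuousLinearMap

/-- The Jacobian of layer normalization
`LN(x) = (x - μ(x)·1)/√(σ_n²(x) + ε)` at `x` equals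
`(1/√(σ_n²+ε)) · (I - y yᵀ/(‖y‖₂² + nε)) · (I - (1/n)J)` where `y = x - μ(x)·1`,
`J` the all-ones matrix. -/
theorem ln_jacobian (n : ℕ) (hn : 0 < n) (ε : ℝ) (hε : 0 < ε)
    (LN : (Fin n → ℝ) → (Fin n → ℝ))
    (hLN : ∀ x : Fin n → ℝ, LN x = fun i =>
      (x i - (n : ℝ)⁻¹ * ∑ j, x j) /
        Real.sqrt ((n : ℝ)⁻¹ * (∑ j, (x j - (n : ℝ)⁻¹ * ∑ l, x l) ^ 2) + ε))
    (x : Fin n → ℝ) (y : Fin n → ℝ)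
    (hy : y = fun i => x i - (n : ℝ)⁻¹ * ∑ j, x j) :
    HasFDerivAt LN
      (LinearMap.toContinuousLinearMap (Matrix.toLin'
        ((Real.sqrt ((n : ℝ)⁻¹ * (∑ j, (y j) ^ 2) + ε))⁻¹ •
          ((1 - ((∑ j, (y j) ^ 2) + (n : ℝ) * ε)⁻¹ •
              Matrix.of (fun i j : Fin n => y i * y j)) *
           (1 - (n : ℝ)⁻¹ • Matrix.of (fun _ _ : Fin n => (1 : ℝ))))))) x := by
  have hn' : (0:ℝ) < n := by exact_mod_cast hn
  have hn0 : (n:ℝ) ≠ 0 := ne_of_gt hn'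
  have hyj : ∀ j, y j = x j - (n:ℝ)⁻¹ * ∑ l, x l := fun j => by rw [hy]
  have hysum : ∑ j, y j = 0 := by
    simp only [hyj, Finset.sum_sub_distrib, Finset.sum_const, card_univ, Fintype.card_fin,
      nsmul_eq_mul]
    field_simp
    ring
  -- S as the x-expression
  set S : ℝ := (n:ℝ)⁻¹ * (∑ j, (x j - (n:ℝ)⁻¹ * ∑ l, x l) ^ 2) + ε with hSdef
  have hSy : S = (n:ℝ)⁻¹ * (∑ j, (y j) ^ 2) + ε := by
    simp only [hSdef, hyj]
  have hS : 0 < S := by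
    rw [hSdef]
    have h1 : 0 ≤ (n:ℝ)⁻¹ * (∑ j, (x j - (n:ℝ)⁻¹ * ∑ l, x l) ^ 2) := by positivity
    linarith
  set w : ℝ := Real.sqrt S with hwdef
  have hw : 0 < w := Real.sqrt_pos.2 hS
  have hw2 : w ^ 2 = S := Real.sq_sqrt hS.le
  -- mean derivative
  set Lμ : (Fin n → ℝ) →L[ℝ] ℝ := (n:ℝ)⁻¹ • (∑ j, ContinuousLinearMap.proj j) with hLμdef
  have hLμ_apply : ∀ v : Fin n → ℝ, Lμ v = (n:ℝ)⁻¹ * ∑ j, v j := by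
    intro v
    simp [hLμdef, ContinuousLinearMap.sum_apply]
  have hμ : HasFDerivAt (fun z : Fin n → ℝ => (n:ℝ)⁻¹ * ∑ j, z j) Lμ x := by
    have h := Lμ.hasFDerivAt (x := x)
    have : (fun z : Fin n → ℝ => (n:ℝ)⁻¹ * ∑ j, z j) = fun z => Lμ z := by
      funext z; rw [hLμ_apply]
    rw [this]; exact h
  have hC : ∀ i, HasFDerivAt (fun z : Fin n → ℝ => z i - (n:ℝ)⁻¹ * ∑ l, z l)
      (ContinuousLinearMap.proj i - Lμ) x :=
    fun i => (hasFDerivAt_apply i x).sub hμ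
  -- derivative of variance part
  have hsum : HasFDerivAt (fun z : Fin n → ℝ => ∑ j, (z j - (n:ℝ)⁻¹ * ∑ l, z l) ^ 2)
      (∑ j, (2 * y j) • (ContinuousLinearMap.proj j - Lμ)) x := by
    refine HasFDerivAt.fun_sum fun j _ => ?_
    have h := (hC j).mul (hC j)
    simpa [pow_two, two_mul, add_smul, hyj, Pi.mul_def] using h
  have hs : HasFDerivAt (fun z : Fin n → ℝ =>
      (n:ℝ)⁻¹ * (∑ j, (z j - (n:ℝ)⁻¹ * ∑ l, z l) ^ 2) + ε)
      ((n:ℝ)⁻¹ • ∑ j, (2 * y j) • (ContinuousLinearMap.proj j - Lμ)) x :=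
    (hsum.const_mul _).add_const ε
  set Ls : (Fin n → ℝ) →L[ℝ] ℝ :=
    (n:ℝ)⁻¹ • ∑ j, (2 * y j) • (ContinuousLinearMap.proj j - Lμ) with hLsdef
  -- derivative of inverse sqrt
  have hinv : HasFDerivAt (fun z : Fin n → ℝ =>
      (Real.sqrt ((n:ℝ)⁻¹ * (∑ j, (z j - (n:ℝ)⁻¹ * ∑ l, z l) ^ 2) + ε))⁻¹)
      ((-(1 / (2 * w)) / w ^ 2) • Ls) x := by
    have h1 : HasDerivAt (fun t => (Real.sqrt t)⁻¹) (-(1 / (2 * w)) / w ^ 2) S :=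
      (Real.hasDerivAt_sqrt hS.ne').inv hw.ne'
    have := h1.comp_hasFDerivAt x hs
    exact this
  -- per-coordinate derivative
  set D : Fin n → (Fin n → ℝ) →L[ℝ] ℝ := fun i =>
    (y i) • ((-(1 / (2 * w)) / w ^ 2) • Ls) + w⁻¹ • (ContinuousLinearMap.proj i - Lμ)
    with hDdef
  have hcoord : ∀ i, HasFDerivAt (fun z : Fin n → ℝ =>
      (z i - (n:ℝ)⁻¹ * ∑ l, z l) *
        (Real.sqrt ((n:ℝ)⁻¹ * (∑ j, (z j - (n:ℝ)⁻¹ * ∑ l, z l) ^ 2) + ε))⁻¹) (D i) x := by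
    intro i
    have h := (hC i).mul hinv
    simpa [hDdef, hyj, Pi.mul_def, ← hSdef, ← hwdef] using h
  have hF : HasFDerivAt (fun z (i : Fin n) =>
      (z i - (n:ℝ)⁻¹ * ∑ l, z l) *
        (Real.sqrt ((n:ℝ)⁻¹ * (∑ j, (z j - (n:ℝ)⁻¹ * ∑ l, z l) ^ 2) + ε))⁻¹)
      (ContinuousLinearMap.pi D) x := hasFDerivAt_pi.2 hcoord
  have hLNeq : LN = fun z (i : Fin n) =>
      (z i - (n:ℝ)⁻¹ * ∑ l, z l) *
        (Real.sqrt ((n:ℝ)⁻¹ * (∑ j, (z j - (n:ℝ)⁻¹ * ∑ l, z l) ^ 2) + ε))⁻¹ := by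
    funext z
    rw [hLN z]
    funext i
    rw [div_eq_mul_inv]
  rw [hLNeq]
  refine hF.congr_fderiv ?_
  -- now prove the continuous linear maps are equal
  apply ContinuousLinearMap.ext
  intro v
  funext i
  have hLv : Lμ v = (n:ℝ)⁻¹ * ∑ j, v j := hLμ_apply v
  have hkey : ∑ j, y j * (v j - (n:ℝ)⁻¹ * ∑ l, v l) = ∑ j, y j * v j := by
    simp [mul_sub, Finset.sum_sub_distrib, ← Finset.sum_mul, hysum]
  have hnS : (∑ j, (y j) ^ 2) + (n:ℝ) * ε = (n:ℝ) * w ^ 2 := by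
    rw [hw2, hSy]; field_simp
  have hQ : ∑ j, 2 * y j * (v j - (n:ℝ)⁻¹ * ∑ l, v l) = 2 * ∑ j, y j * v j := by
    simp only [mul_assoc, ← Finset.mul_sum, hkey]
  have hB : (1 - (n:ℝ)⁻¹ • Matrix.of (fun _ _ : Fin n => (1:ℝ))).mulVec v
      = fun k => v k - (n:ℝ)⁻¹ * ∑ l, v l := by
    funext k
    simp [Matrix.mulVec, dotProduct, Matrix.sub_apply, Matrix.one_apply,
      Matrix.smul_apply, Matrix.of_apply, sub_mul, Finset.sum_sub_distrib,
      Finset.sum_ite_eq, Finset.mul_sum]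
  have hA : ((1 - ((∑ j, (y j) ^ 2) + (n:ℝ) * ε)⁻¹ •
        Matrix.of (fun i j : Fin n => y i * y j)).mulVec
        (fun k => v k - (n:ℝ)⁻¹ * ∑ l, v l)) i
      = (v i - (n:ℝ)⁻¹ * ∑ l, v l) -
        ((∑ j, (y j) ^ 2) + (n:ℝ) * ε)⁻¹ * (y i * ∑ k, y k * v k) := by
    simp [Matrix.mulVec, dotProduct, Matrix.sub_apply, Matrix.one_apply,
      Matrix.smul_apply, Matrix.of_apply, sub_mul, Finset.sum_sub_distrib,
      Finset.sum_ite_eq, mul_assoc, ← Finset.mul_sum, hkey]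
  simp only [LinearMap.coe_toContinuousLinearMap', Matrix.toLin'_apply,
    Matrix.smul_mulVec, ← Matrix.mulVec_mulVec, hB, Pi.smul_apply, smul_eq_mul, hA,
    ContinuousLinearMap.pi_apply, hDdef, ContinuousLinearMap.add_apply,
    ContinuousLinearMap.coe_smul', ContinuousLinearMap.coe_sub', Pi.sub_apply,
    ContinuousLinearMap.proj_apply, hLsdef, ContinuousLinearMap.coe_sum',
    Finset.sum_apply, hLv, ← hSy, hQ]
  rw [hnS]
  field_simp
  ring
end

section
/- Let ReLU feedforward networks on ℝ^{n_0} have depth K with layer widths n_1,...,n_K and weight-norm bounds s_1,...,s_K ≥ 0. For any a_i ∈ [0, s_i] (i = 1,...,K), there exist weight matrices W_i with induced infinity norm ‖W_i‖ ≤ s_i such that the resulting network h*(x) = ReLU(W_K(...ReLU(W_1 x)...)) satisfies h*(x) = (∏_{i=1}^K a_i)·ReLU(x^{(n_1,...,n_K)}) for all x, and its exact Lipschitz constant with respect to x (in sup norm) equals ∏_{i=1}^K a_i. -/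
/-- Induced infinity norm of a matrix: maximum absolute row sum. -/
noncomputable def infNorm {n m : ℕ} (A : Matrix (Fin n) (Fin m) ℝ) : ℝ :=
  ⨆ i, ∑ j, |A i j|

/-- Coordinatewise ReLU. -/
def relu {k : ℕ} (v : Fin k → ℝ) : Fin k → ℝ := fun i => max (v i) 0

/-- `padChain n a b v` is the result `v^{(n (a+1), ..., n b)}` of successively applying the
truncation/zero-padding maps with target sizes `n (a+1), …, n b` to `v : Fin (n a) → ℝ`:
coordinate `t` survives iff `t < n j` for every intermediate size `n j`, `a ≤ j < b`. -/
def padChain (n : ℕ → ℕ) (a b : ℕ) (v : Fin (n a) → ℝ) : Fin (n b) → ℝ :=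
  fun t => if h : (t : ℕ) < n a ∧ ∀ j, a ≤ j → j < b → (t : ℕ) < n j then v ⟨t, h.1⟩ else 0

/-- For a depth-`K` ReLU feedforward family with widths `n_1,…,n_K` and weight
bounds `s_1,…,s_K`, and any `a_i ∈ [0, s_i]`, there are weights `W_i` with `‖W_i‖ ≤ s_i`
such that the network equals `(∏ a_i)·ReLU(x^{(n_1,…,n_K)})` and its exact Lipschitz
constant (sup norm) equals `∏ a_i`. -/
theorem relu_ffn_lower_bound (K : ℕ) (hK : 0 < K) (n : ℕ → ℕ) (hn : ∀ i, 0 < n i)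
    (s a : ℕ → ℝ) (ha : ∀ i, a i ∈ Set.Icc 0 (s i)) :
    ∃ W : (i : ℕ) → Matrix (Fin (n (i + 1))) (Fin (n i)) ℝ,
      (∀ i, i < K → infNorm (W i) ≤ s i) ∧
      ∀ h : (i : ℕ) → (Fin (n 0) → ℝ) → (Fin (n i) → ℝ),
        (∀ x, h 0 x = x) →
        (∀ i x, h (i + 1) x = relu ((W i).mulVec (h i x))) →
        (∀ x, h K x = (∏ i ∈ Finset.range K, a i) • relu (padChain n 0 K x)) ∧
        (∀ x y, ‖h K x - h K y‖ ≤ (∏ i ∈ Finset.range K, a i) * ‖x - y‖) ∧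
        (∀ L : ℝ, (∀ x y, ‖h K x - h K y‖ ≤ L * ‖x - y‖) →
          (∏ i ∈ Finset.range K, a i) ≤ L) := by
  set W : (i : ℕ) → Matrix (Fin (n (i + 1))) (Fin (n i)) ℝ :=
    fun i => Matrix.of fun r c => if (r : ℕ) = (c : ℕ) then a i else 0 with hW
  have hmul : ∀ (i : ℕ) (v : Fin (n i) → ℝ) (r : Fin (n (i + 1))),
      (W i).mulVec v r = if h : (r : ℕ) < n i then a i * v ⟨r, h⟩ else 0 := by
    intro i v r
    simp only [hW, Matrix.mulVec, dotProduct, Matrix.of_apply]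
    by_cases h : (r : ℕ) < n i
    · rw [dif_pos h, Finset.sum_eq_single (⟨(r : ℕ), h⟩ : Fin (n i))]
      · simp
      · intro b _ hb
        rw [if_neg, zero_mul]
        intro hc
        exact hb (Fin.ext hc.symm)
      · simp
    · rw [dif_neg h]
      apply Finset.sum_eq_zero
      intro b _
      rw [if_neg, zero_mul]
      intro hc
      exact h (hc ▸ b.isLt)
  have hpad_succ : ∀ (m : ℕ) (x : Fin (n 0) → ℝ) (r : Fin (n (m + 1 + 1)))
      (hr : (r : ℕ) < n (m + 1)),
      padChain n 0 (m + 1 + 1) x r = padChain n 0 (m + 1) x ⟨(r : ℕ), hr⟩ := by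
    intro m x r hr
    simp only [padChain]
    by_cases hc : (r : ℕ) < n 0 ∧ ∀ j, 0 ≤ j → j < m + 1 → (r : ℕ) < n j
    · rw [dif_pos hc, dif_pos]
      refine ⟨hc.1, fun j h0 hj => ?_⟩
      rcases Nat.lt_succ_iff_lt_or_eq.mp hj with h | h
      · exact hc.2 j h0 h
      · exact h ▸ hr
    · rw [dif_neg hc, dif_neg]
      intro hc2
      exact hc ⟨hc2.1, fun j h0 hj => hc2.2 j h0 (by omega)⟩
  have hpad_zero : ∀ (m : ℕ) (x : Fin (n 0) → ℝ) (r : Fin (n (m + 1 + 1))),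
      ¬ (r : ℕ) < n (m + 1) → padChain n 0 (m + 1 + 1) x r = 0 := by
    intro m x r hr
    simp only [padChain]
    rw [dif_neg]
    intro hc
    exact hr (hc.2 (m + 1) (Nat.zero_le _) (by omega))
  refine ⟨W, ?_, ?_⟩
  · intro i _
    have h0 := (ha i).1
    have h1 := (ha i).2
    have hs : 0 ≤ s i := h0.trans h1
    apply Real.iSup_le _ hs
    intro r
    by_cases h : (r : ℕ) < n i
    · calc ∑ j, |W i r j| = |a i| := by
            rw [Finset.sum_eq_single (⟨(r : ℕ), h⟩ : Fin (n i))]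
            · simp [hW]
            · intro b _ hb
              simp only [hW, Matrix.of_apply]
              rw [if_neg, abs_zero]
              intro hc
              exact hb (Fin.ext hc.symm)
            · simp
        _ ≤ s i := by rw [abs_of_nonneg h0]; exact h1
    · calc ∑ j, |W i r j| = 0 := by
            apply Finset.sum_eq_zero
            intro b _
            simp only [hW, Matrix.of_apply]
            rw [if_neg, abs_zero]
            intro hc
            exact h (hc ▸ b.isLt)
        _ ≤ s i := hs
  · intro h h0 hstep
    have hc : 0 ≤ ∏ i ∈ Finset.range K, a i :=
      Finset.prod_nonneg fun i _ => (ha i).1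
    have key : ∀ (m : ℕ) (x : Fin (n 0) → ℝ),
        h (m + 1) x = (∏ i ∈ Finset.range (m + 1), a i) • relu (padChain n 0 (m + 1) x) := by
      intro m
      induction m with
      | zero =>
        intro x
        rw [hstep, h0]
        funext r
        rw [relu, hmul]
        simp only [relu, padChain, Pi.smul_apply, smul_eq_mul, Finset.prod_range_one]
        by_cases hr : (r : ℕ) < n 0
        · have hcond : (r : ℕ) < n 0 ∧ ∀ j, 0 ≤ j → j < 0 + 1 → (r : ℕ) < n j := by
            refine ⟨hr, fun j _ hj => ?_⟩
            have : j = 0 := by omega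
            exact this ▸ hr
          rw [dif_pos hr, dif_pos hcond]
          have hp1 : (∏ i ∈ Finset.range (0 + 1), a i) = a 0 := by simp
          rw [hp1, mul_max_of_nonneg _ _ (ha 0).1, mul_zero]
        · rw [dif_neg hr, dif_neg (fun hc2 => hr hc2.1)]
          simp
      | succ m ih =>
        intro x
        rw [hstep, ih]
        funext r
        rw [relu, hmul]
        simp only [Pi.smul_apply, smul_eq_mul]
        rw [Finset.prod_range_succ a (m + 1)]
        by_cases hr : (r : ℕ) < n (m + 1)
        · rw [dif_pos hr]
          have e1 : relu (padChain n 0 (m + 1 + 1) x) r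
              = relu (padChain n 0 (m + 1) x) ⟨(r : ℕ), hr⟩ := by
            simp only [relu]
            rw [hpad_succ m x r hr]
          rw [e1]
          have h1 : 0 ≤ ∏ i ∈ Finset.range (m + 1), a i :=
            Finset.prod_nonneg fun i _ => (ha i).1
          have h3 : 0 ≤ a (m + 1) := (ha (m + 1)).1
          have hq : 0 ≤ relu (padChain n 0 (m + 1) x) ⟨(r : ℕ), hr⟩ :=
            le_max_right _ _
          rw [max_eq_left (mul_nonneg h3 (mul_nonneg h1 hq))]
          ring
        · rw [dif_neg hr]
          have e0 : padChain n 0 (m + 1 + 1) x r = 0 := hpad_zero m x r hr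
          simp [relu, e0]
    obtain ⟨m, rfl⟩ : ∃ m, K = m + 1 := ⟨K - 1, by omega⟩
    have heq := key m
    refine ⟨heq, ?_, ?_⟩
    · intro x y
      rw [heq, heq]
      set c := ∏ i ∈ Finset.range (m + 1), a i
      rw [pi_norm_le_iff_of_nonneg (mul_nonneg hc (norm_nonneg _))]
      intro r
      simp only [Pi.sub_apply, Pi.smul_apply, smul_eq_mul, Real.norm_eq_abs]
      rw [← mul_sub, abs_mul, abs_of_nonneg hc]
      apply mul_le_mul_of_nonneg_left _ hc
      calc |relu (padChain n 0 (m + 1) x) r - relu (padChain n 0 (m + 1) y) r|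
          ≤ |padChain n 0 (m + 1) x r - padChain n 0 (m + 1) y r| :=
            abs_max_sub_max_le_abs _ _ _
        _ ≤ ‖x - y‖ := by
            simp only [padChain]
            by_cases hcnd : (r : ℕ) < n 0 ∧ ∀ j, 0 ≤ j → j < m + 1 → (r : ℕ) < n j
            · rw [dif_pos hcnd, dif_pos hcnd]
              have := norm_le_pi_norm (x - y) ⟨(r : ℕ), hcnd.1⟩
              simpa [Real.norm_eq_abs] using this
            · rw [dif_neg hcnd, dif_neg hcnd]
              simp
    · intro L hL
      set c := ∏ i ∈ Finset.range (m + 1), a i with hcdef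
      set x0 : Fin (n 0) → ℝ := fun t => if (t : ℕ) = 0 then 1 else 0 with hx0
      have hKpos := hn (m + 1)
      have h0pos := hn 0
      have hx0norm : ‖x0‖ = 1 := by
        apply le_antisymm
        · rw [pi_norm_le_iff_of_nonneg zero_le_one]
          intro r
          simp only [hx0, Real.norm_eq_abs]
          split <;> simp
        · have := norm_le_pi_norm x0 ⟨0, h0pos⟩
          simpa [hx0, Real.norm_eq_abs] using this
      have hzero : h (m + 1) 0 = 0 := by
        rw [heq]
        funext r
        simp only [Pi.smul_apply, smul_eq_mul, relu, padChain, Pi.zero_apply]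
        split <;> simp
      have hx0val : h (m + 1) x0 ⟨0, hKpos⟩ = c := by
        rw [heq]
        simp only [Pi.smul_apply, smul_eq_mul, relu, padChain]
        rw [dif_pos ⟨h0pos, fun j _ _ => hn j⟩]
        simp [hx0]
      have := hL x0 0
      rw [sub_zero, hx0norm, mul_one, hzero, sub_zero] at this
      calc c = |h (m + 1) x0 ⟨0, hKpos⟩| := by rw [hx0val, abs_of_nonneg hc]
        _ ≤ ‖h (m + 1) x0‖ := by
            have := norm_le_pi_norm (h (m + 1) x0) ⟨0, hKpos⟩
            simpa [Real.norm_eq_abs] using this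
        _ ≤ L := this
end

section
/- Let u_K be a normalized feedforward network as above, and let A_{i-1} = sup_x ‖u_{i-1}(x)‖_∞ be finite. Then for fixed input x, the map W_i ↦ u_K(x) (with other weights fixed) is Lipschitz with respect to the induced infinity norm on W_i, with constant at most A_{i-1} times the Lipschitz constant of u_K with respect to y_i; hence at most A_{i-1}·‖W_{i+1}‖⋯‖W_K‖·∏_{k=i}^K L_k for i < K. -/
lemma infNorm_nonneg {n m : ℕ} (A : Matrix (Fin n) (Fin m) ℝ) : 0 ≤ infNorm A :=
  Real.iSup_nonneg fun i => Finset.sum_nonneg fun j _ => abs_nonneg _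

lemma mulVec_norm_le {n m : ℕ} (A : Matrix (Fin n) (Fin m) ℝ) (v : Fin m → ℝ) :
    ‖A.mulVec v‖ ≤ infNorm A * ‖v‖ := by
  rw [pi_norm_le_iff_of_nonneg (mul_nonneg (infNorm_nonneg A) (norm_nonneg v))]
  intro i
  have h1 : ‖A.mulVec v i‖ ≤ ∑ j, |A i j| * ‖v‖ := by
    simp only [Matrix.mulVec, dotProduct, Real.norm_eq_abs]
    refine (Finset.abs_sum_le_sum_abs _ _).trans (Finset.sum_le_sum fun j _ => ?_)
    rw [abs_mul]
    exact mul_le_mul_of_nonneg_left (norm_le_pi_norm v j) (abs_nonneg _)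
  refine h1.trans ?_
  rw [← Finset.sum_mul]
  refine mul_le_mul_of_nonneg_right ?_ (norm_nonneg _)
  exact le_ciSup (f := fun i => ∑ j, |A i j|) (Set.Finite.bddAbove (Set.finite_range _)) i

/-- In a normalized feedforward network with layers `0,…,K` (output
`U M (K+1)`), where `M` denotes the candidate weight matrix at layer `i`, and where
`A ≥ sup ‖u_{i-1}‖` bounds the input to layer `i`, the map `M ↦ u_K(x)` (fixed input `x`,
other weights fixed) is Lipschitz from the induced infinity norm to the sup norm with
constant at most `A·‖W_{i+1}‖⋯‖W_K‖·∏_{k=i}^K L_k`. -/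
theorem normalized_weight_lipschitz (K : ℕ) (n : ℕ → ℕ)
    (W : (j : ℕ) → Matrix (Fin (n (j + 1))) (Fin (n j)) ℝ)
    (g NO : (j : ℕ) → (Fin (n (j + 1)) → ℝ) → (Fin (n (j + 1)) → ℝ))
    (L : ℕ → ℝ) (hL : ∀ j, 0 ≤ L j)
    (hg : ∀ j u v, ‖g j u - g j v‖ ≤ ‖u - v‖)
    (hNO : ∀ j u v, ‖NO j u - NO j v‖ ≤ L j * ‖u - v‖)
    (i : ℕ) (hiK : i ≤ K) (x : Fin (n 0) → ℝ)
    (U : Matrix (Fin (n (i + 1))) (Fin (n i)) ℝ → (j : ℕ) → (Fin (n j) → ℝ))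
    (hU0 : ∀ M, U M 0 = x)
    (hUrec : ∀ M j, j ≠ i → U M (j + 1) = g j (NO j ((W j).mulVec (U M j))))
    (hUi : ∀ M, U M (i + 1) = g i (NO i (M.mulVec (U M i))))
    (A : ℝ) (hA : ∀ M, ‖U M i‖ ≤ A) :
    ∀ M M', ‖U M (K + 1) - U M' (K + 1)‖ ≤
      A * ((∏ j ∈ Finset.Ioc i K, infNorm (W j)) * ∏ j ∈ Finset.Icc i K, L j) *
        infNorm (M - M') := by
  intro M M'
  have hA0 : 0 ≤ A := (norm_nonneg _).trans (hA M)
  -- U M j = U M' j for j ≤ i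
  have heq : ∀ j, j ≤ i → U M j = U M' j := by
    intro j hj
    induction j with
    | zero => rw [hU0, hU0]
    | succ j ih =>
      have hji : j ≠ i := fun h => by omega
      rw [hUrec M j hji, hUrec M' j hji, ih (by omega)]
  -- main induction
  have main : ∀ k, i ≤ k → ‖U M (k + 1) - U M' (k + 1)‖ ≤
      A * ((∏ j ∈ Finset.Ioc i k, infNorm (W j)) * ∏ j ∈ Finset.Icc i k, L j) *
        infNorm (M - M') := by
    intro k hk
    induction k, hk using Nat.le_induction with
    | base =>
      rw [Finset.Ioc_self, Finset.prod_empty, Finset.Icc_self, Finset.prod_singleton]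
      rw [hUi M, hUi M']
      calc ‖g i (NO i (M.mulVec (U M i))) - g i (NO i (M'.mulVec (U M' i)))‖
          ≤ ‖NO i (M.mulVec (U M i)) - NO i (M'.mulVec (U M' i))‖ := hg _ _ _
        _ ≤ L i * ‖M.mulVec (U M i) - M'.mulVec (U M' i)‖ := hNO _ _ _
        _ = L i * ‖(M - M').mulVec (U M i)‖ := by
            rw [← heq i le_rfl, ← Matrix.sub_mulVec]
        _ ≤ L i * (infNorm (M - M') * ‖U M i‖) :=
            mul_le_mul_of_nonneg_left (mulVec_norm_le _ _) (hL i)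
        _ ≤ L i * (infNorm (M - M') * A) := by
            refine mul_le_mul_of_nonneg_left ?_ (hL i)
            exact mul_le_mul_of_nonneg_left (hA M) (infNorm_nonneg _)
        _ = A * (1 * L i) * infNorm (M - M') := by ring
    | succ k hk ih =>
      have hki : k + 1 ≠ i := by omega
      rw [hUrec M _ hki, hUrec M' _ hki]
      calc ‖g (k+1) (NO (k+1) ((W (k+1)).mulVec (U M (k+1)))) -
              g (k+1) (NO (k+1) ((W (k+1)).mulVec (U M' (k+1))))‖
          ≤ ‖NO (k+1) ((W (k+1)).mulVec (U M (k+1))) -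
              NO (k+1) ((W (k+1)).mulVec (U M' (k+1)))‖ := hg _ _ _
        _ ≤ L (k+1) * ‖(W (k+1)).mulVec (U M (k+1)) -
              (W (k+1)).mulVec (U M' (k+1))‖ := hNO _ _ _
        _ = L (k+1) * ‖(W (k+1)).mulVec (U M (k+1) - U M' (k+1))‖ := by
            rw [Matrix.mulVec_sub]
        _ ≤ L (k+1) * (infNorm (W (k+1)) * ‖U M (k+1) - U M' (k+1)‖) :=
            mul_le_mul_of_nonneg_left (mulVec_norm_le _ _) (hL _)
        _ ≤ L (k+1) * (infNorm (W (k+1)) *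
              (A * ((∏ j ∈ Finset.Ioc i k, infNorm (W j)) *
                ∏ j ∈ Finset.Icc i k, L j) * infNorm (M - M'))) := by
            refine mul_le_mul_of_nonneg_left
              (mul_le_mul_of_nonneg_left ih (infNorm_nonneg _)) (hL _)
        _ = A * ((∏ j ∈ Finset.Ioc i (k+1), infNorm (W j)) *
              ∏ j ∈ Finset.Icc i (k+1), L j) * infNorm (M - M') := by
            rw [Finset.prod_Ioc_succ_top hk, Finset.prod_Icc_succ_top (by omega)]
            ring
  exact main K hiK
end

section
/- In the ReLU feedforward family with widths n_0,...,n_K and weight bounds s_1,...,s_K, for any layer index i with 1 ≤ i < K and any a_j ∈ [0, s_j] for j > i, there exists a choice of weights W_{i+1},...,W_K with ‖W_j‖ ≤ s_j such that for all W_i and all x, the network output satisfies h_K = (∏_{j=i+1}^K a_j)·ReLU((W_i h_{i-1})^{(n_{i+1},...,n_K)}); consequently the Lipschitz constant of h_K with respect to the pre-activation y_i = W_i h_{i-1} equals exactly ∏_{j=i+1}^K a_j. -/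
namespace ReluTail

def pad1 (n : ℕ → ℕ) (j : ℕ) (v : Fin (n j) → ℝ) : Fin (n (j + 1)) → ℝ :=
  fun t => if h : (t : ℕ) < n j then v ⟨t, h⟩ else 0

def wt (n : ℕ → ℕ) (a : ℕ → ℝ) (j : ℕ) : Matrix (Fin (n (j + 1))) (Fin (n j)) ℝ :=
  fun t u => if (t : ℕ) = (u : ℕ) then a j else 0

lemma wt_mulVec (n : ℕ → ℕ) (a : ℕ → ℝ) (j : ℕ) (v : Fin (n j) → ℝ) :
    (wt n a j).mulVec v = a j • pad1 n j v := by
  funext t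
  simp only [Matrix.mulVec, dotProduct, wt, pad1, Pi.smul_apply, smul_eq_mul]
  by_cases h : (t : ℕ) < n j
  · rw [dif_pos h, Finset.sum_eq_single (⟨t, h⟩ : Fin (n j))]
    · simp
    · intro u _ hu
      rw [if_neg, zero_mul]
      intro he
      exact hu (by ext; exact he.symm)
    · intro hne; exact absurd (Finset.mem_univ _) hne
  · rw [dif_neg h, mul_zero]
    apply Finset.sum_eq_zero
    intro u _
    rw [if_neg, zero_mul]
    intro he
    exact h (he ▸ u.isLt)

lemma infNorm_wt_le (n : ℕ → ℕ) (hn : ∀ j, 0 < n j) (a s : ℕ → ℝ) (j : ℕ)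
    (h0 : 0 ≤ a j) (h1 : a j ≤ s j) : infNorm (wt n a j) ≤ s j := by
  have : Nonempty (Fin (n (j + 1))) := ⟨⟨0, hn _⟩⟩
  apply ciSup_le
  intro t
  by_cases h : (t : ℕ) < n j
  · rw [Finset.sum_eq_single (⟨t, h⟩ : Fin (n j))]
    · simpa [wt, abs_of_nonneg h0] using h1
    · intro u _ hu
      rw [wt, if_neg, abs_zero]
      intro he; exact hu (by ext; exact he.symm)
    · intro hne; exact absurd (Finset.mem_univ _) hne
  · rw [Finset.sum_eq_zero]
    · exact le_trans h0 h1
    · intro u _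
      rw [wt, if_neg, abs_zero]
      intro he; exact h (he ▸ u.isLt)

lemma relu_smul {k : ℕ} (c : ℝ) (hc : 0 ≤ c) (v : Fin k → ℝ) :
    relu (c • v) = c • relu v := by
  funext t
  simp only [relu, Pi.smul_apply, smul_eq_mul]
  rw [mul_max_of_nonneg _ _ hc, mul_zero]

lemma relu_relu {k : ℕ} (v : Fin k → ℝ) : relu (relu v) = relu v := by
  funext t
  simp [relu, max_assoc]

lemma pad1_smul (n : ℕ → ℕ) (j : ℕ) (c : ℝ) (v : Fin (n j) → ℝ) :
    pad1 n j (c • v) = c • pad1 n j v := by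
  funext t
  simp only [pad1, Pi.smul_apply, smul_eq_mul]
  split_ifs <;> simp

lemma pad1_relu (n : ℕ → ℕ) (j : ℕ) (v : Fin (n j) → ℝ) :
    pad1 n j (relu v) = relu (pad1 n j v) := by
  funext t
  simp only [pad1, relu]
  split_ifs <;> simp

lemma padChain_succ (n : ℕ → ℕ) (a m : ℕ) (ham : a ≤ m) (y : Fin (n a) → ℝ) :
    padChain n a (m + 1) y = pad1 n m (padChain n a m y) := by
  funext t
  simp only [padChain, pad1]
  by_cases h1 : (t : ℕ) < n m
  · rw [dif_pos h1]
    by_cases h2 : (t : ℕ) < n a ∧ ∀ j, a ≤ j → j < m → (t : ℕ) < n j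
    · have hcond : (t : ℕ) < n a ∧ ∀ j, a ≤ j → j < m + 1 → (t : ℕ) < n j := by
        refine ⟨h2.1, fun j hj hj' => ?_⟩
        rcases Nat.lt_succ_iff_lt_or_eq.mp hj' with h | h
        · exact h2.2 j hj h
        · exact h ▸ h1
      rw [dif_pos hcond, dif_pos h2]
    · rw [dif_neg h2, dif_neg]
      intro hc
      exact h2 ⟨hc.1, fun j hj hj' => hc.2 j hj (Nat.lt_succ_of_lt hj')⟩
  · rw [dif_neg h1, dif_neg]
    intro hc
    exact h1 (hc.2 m ham (Nat.lt_succ_self m))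

lemma padChain_self (n : ℕ → ℕ) (a : ℕ) (y : Fin (n a) → ℝ) :
    padChain n a a y = y := by
  funext t
  rw [padChain, dif_pos ⟨t.isLt, fun j hj hj' => absurd (lt_of_le_of_lt hj hj') (lt_irrefl a)⟩]

lemma Ioo_succ (i m : ℕ) (h : i < m) :
    Finset.Ioo i (m + 1) = insert m (Finset.Ioo i m) := by
  rw [Finset.Ioo_insert_right h]
  ext x
  simp [Nat.lt_succ_iff]

/-- Key induction: tail of the network multiplies by the product of a's. -/
lemma tail_eval (K : ℕ) (n : ℕ → ℕ) (a : ℕ → ℝ) (i : ℕ)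
    (ha : ∀ j, 0 ≤ a j)
    (g : (j : ℕ) → Fin (n j) → ℝ) (y : Fin (n (i + 1)) → ℝ)
    (hg1 : g (i + 1) = relu y)
    (hgs : ∀ j, i + 1 ≤ j → j + 1 ≤ K → g (j + 1) = relu ((wt n a j).mulVec (g j))) :
    ∀ m, i + 1 ≤ m → m ≤ K →
      g m = (∏ j ∈ Finset.Ioo i m, a j) • relu (padChain n (i + 1) m y) := by
  intro m hm
  induction m, hm using Nat.le_induction with
  | base =>
    intro _
    have he : Finset.Ioo i (i + 1) = ∅ := by
      ext x; simp
    simp [he, padChain_self, hg1]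
  | succ m hm ih =>
    intro hmK
    have hc : 0 ≤ ∏ j ∈ Finset.Ioo i m, a j := Finset.prod_nonneg fun j _ => ha j
    rw [hgs m hm hmK, ih (le_of_lt hmK), wt_mulVec,
      pad1_smul, pad1_relu, ← padChain_succ n (i+1) m hm,
      relu_smul _ (ha m), relu_smul _ hc, relu_relu,
      Ioo_succ i m hm, Finset.prod_insert (by simp), mul_smul]

end ReluTail

/-- In a ReLU feedforward family (layers `0,…,K-1`, widths `n`, weight
bounds `s`), for a layer index `i` with `i + 1 < K` and any `a_j ∈ [0, s_j]` for `j > i`,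
there exist tail weights `Wt_j` with `‖Wt_j‖ ≤ s_j` such that for every choice of the
remaining weights the network output satisfies
`h_K = (∏_{i<j<K} a_j) • ReLU((W_i h_i)^{(n_{i+2},…,n_K)})`, and the Lipschitz constant of
`h_K` with respect to the pre-activation `y_i = W_i h_i` equals exactly `∏_{i<j<K} a_j`. -/
theorem relu_tail_construction (K : ℕ) (n : ℕ → ℕ) (hn : ∀ j, 0 < n j)
    (s a : ℕ → ℝ) (i : ℕ) (hi : i + 1 < K)
    (ha : ∀ j, a j ∈ Set.Icc 0 (s j)) :
    ∃ Wt : (j : ℕ) → Matrix (Fin (n (j + 1))) (Fin (n j)) ℝ,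
      (∀ j, i < j → j < K → infNorm (Wt j) ≤ s j) ∧
      ∀ W : (j : ℕ) → Matrix (Fin (n (j + 1))) (Fin (n j)) ℝ,
        (∀ j, i < j → j < K → W j = Wt j) →
        (∀ h : (j : ℕ) → (Fin (n 0) → ℝ) → (Fin (n j) → ℝ),
          (∀ x, h 0 x = x) →
          (∀ j x, h (j + 1) x = relu ((W j).mulVec (h j x))) →
          ∀ x, h K x = (∏ j ∈ Finset.Ioo i K, a j) •
            relu (padChain n (i + 1) K ((W i).mulVec (h i x)))) ∧
        (∀ t : (j : ℕ) → (Fin (n (i + 1)) → ℝ) → (Fin (n j) → ℝ),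
          (∀ y, t (i + 1) y = relu y) →
          (∀ j, i + 1 ≤ j → ∀ y, t (j + 1) y = relu ((W j).mulVec (t j y))) →
          (∀ y y', ‖t K y - t K y'‖ ≤ (∏ j ∈ Finset.Ioo i K, a j) * ‖y - y'‖) ∧
          (∀ L : ℝ, (∀ y y', ‖t K y - t K y'‖ ≤ L * ‖y - y'‖) →
            (∏ j ∈ Finset.Ioo i K, a j) ≤ L)) := by
  classical
  have ha0 : ∀ j, 0 ≤ a j := fun j => (ha j).1
  set c := ∏ j ∈ Finset.Ioo i K, a j with hcdef
  have hc0 : 0 ≤ c := Finset.prod_nonneg fun j _ => ha0 j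
  refine ⟨ReluTail.wt n a,
    fun j _ _ => ReluTail.infNorm_wt_le n hn a s j (ha0 j) (ha j).2, ?_⟩
  intro W hW
  constructor
  · intro h h0 hrec x
    exact ReluTail.tail_eval K n a i ha0 (fun j => h j x) ((W i).mulVec (h i x))
      (hrec i x)
      (fun j hj hjK => by
        simpa [hW j (by omega) (by omega)] using hrec j x)
      K (le_of_lt hi) le_rfl
  · intro t ht1 hts
    have hK : ∀ y, t K y = c • relu (padChain n (i + 1) K y) := fun y =>
      ReluTail.tail_eval K n a i ha0 (fun j => t j y) y (ht1 y)
        (fun j hj hjK => by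
          simpa [hW j (by omega) (by omega)] using hts j hj y)
        K (le_of_lt hi) le_rfl
    have hlip : ∀ y y' : Fin (n (i + 1)) → ℝ,
        ‖relu (padChain n (i + 1) K y) - relu (padChain n (i + 1) K y')‖ ≤ ‖y - y'‖ := by
      intro y y'
      rw [pi_norm_le_iff_of_nonneg (norm_nonneg _)]
      intro u
      simp only [Pi.sub_apply, relu, Real.norm_eq_abs]
      have habs : |max (padChain n (i + 1) K y u) 0 - max (padChain n (i + 1) K y' u) 0|
          ≤ |padChain n (i + 1) K y u - padChain n (i + 1) K y' u| := by
        have h := abs_max_sub_max_le_max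
          (padChain n (i + 1) K y u) 0 (padChain n (i + 1) K y' u) 0
        simpa using h
      refine le_trans habs ?_
      simp only [padChain]
      split_ifs with hcond
      · simpa using norm_le_pi_norm (y - y') ⟨u, hcond.1⟩
      · simpa using norm_nonneg (y - y')
    constructor
    · intro y y'
      rw [hK y, hK y', ← smul_sub, norm_smul, Real.norm_eq_abs, abs_of_nonneg hc0]
      exact mul_le_mul_of_nonneg_left (hlip y y') hc0
    · intro L hL
      have hne : Nonempty (Fin (n (i + 1))) := ⟨⟨0, hn _⟩⟩
      set y1 : Fin (n (i + 1)) → ℝ := fun _ => 1 with hy1def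
      have ht0 : t K 0 = 0 := by
        rw [hK]
        funext u
        simp [padChain, relu, apply_dite (fun w : ℝ => max w 0)]
      have hz0 : relu (padChain n (i + 1) K y1) ⟨0, hn _⟩ = 1 := by
        simp only [relu, padChain]
        rw [dif_pos ⟨hn _, fun j _ _ => hn j⟩]
        exact max_eq_left zero_le_one
      have hzn : 1 ≤ ‖relu (padChain n (i + 1) K y1)‖ := by
        have := norm_le_pi_norm (relu (padChain n (i + 1) K y1)) ⟨0, hn _⟩
        rwa [hz0, norm_one] at this
      have hy1n : ‖y1 - 0‖ = 1 := by
        rw [sub_zero]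
        simpa using pi_norm_const (1 : ℝ)
      calc c = c * 1 := (mul_one c).symm
        _ ≤ c * ‖relu (padChain n (i + 1) K y1)‖ := by
            exact mul_le_mul_of_nonneg_left hzn hc0
        _ = ‖t K y1 - t K 0‖ := by
            rw [ht0, sub_zero, hK, norm_smul, Real.norm_eq_abs, abs_of_nonneg hc0]
        _ ≤ L * ‖y1 - 0‖ := hL y1 0
        _ = L := by rw [hy1n, mul_one]
end

section
/- Let f and g be real functions with g differentiable, and consider the scalar-output network h(x) = g(W h_K(x)) with W = c·1ᵀ (the row vector with all entries c > 0) and h_K built with W_j = a_j I_j for j > i (a_j > 0). Then for the empirical loss L(h, D) = (1/m)∑_{x∈D} f(h(x)), the partial gradient with respect to the t-th row W_{it} of W_i equals (c·∏_{j=i+1}^K a_j / m)·∑_{x∈D} (f∘g)'(u(x))·𝟙[W_{it} h_{i-1}(x) ≥ 0]·h_{i-1}(x)ᵀ for any t ≤ min{n_{i+1},...,n_K}, where u(x) = W h_K(x); and the gradient with respect to W_{it} is zero for t > min{n_{i+1},...,n_K}. -/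
open Matrix

noncomputable def dotCLM {k : ℕ} (h : Fin k → ℝ) : (Fin k → ℝ) →L[ℝ] ℝ :=
  LinearMap.toContinuousLinearMap (∑ q, h q • (LinearMap.proj q : (Fin k → ℝ) →ₗ[ℝ] ℝ))

lemma dotCLM_apply {k : ℕ} (h v : Fin k → ℝ) : dotCLM h v = ∑ q, h q * v q := by
  simp [dotCLM, LinearMap.sum_apply]

lemma dot_eq_dotCLM {k : ℕ} (h : Fin k → ℝ) : (fun w : Fin k → ℝ => w ⬝ᵥ h) = dotCLM h := by
  funext v; rw [dotCLM_apply]; simp [dotProduct, mul_comm]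

lemma hasFDerivAt_dot {k : ℕ} (h : Fin k → ℝ) (w0 : Fin k → ℝ) :
    HasFDerivAt (fun w => w ⬝ᵥ h) (dotCLM h) w0 := by
  rw [dot_eq_dotCLM]; exact (dotCLM h).hasFDerivAt

lemma hasFDerivAt_maxdot {k : ℕ} (h : Fin k → ℝ) (w0 : Fin k → ℝ) (h0 : w0 ⬝ᵥ h ≠ 0) :
    HasFDerivAt (fun w => max (w ⬝ᵥ h) 0)
      ((if 0 ≤ w0 ⬝ᵥ h then (1:ℝ) else 0) • dotCLM h) w0 := by
  have hcont : Continuous fun w : Fin k → ℝ => w ⬝ᵥ h := by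
    rw [dot_eq_dotCLM]; exact (dotCLM h).continuous
  rcases lt_or_gt_of_ne h0 with hneg | hpos
  · have hev : ∀ᶠ w in nhds w0, (fun w : Fin k → ℝ => max (w ⬝ᵥ h) 0) w = (fun _ => (0:ℝ)) w := by
      filter_upwards [(hcont.continuousAt).eventually_lt continuousAt_const hneg] with w hw
      simp [max_eq_right hw.le]
    rw [if_neg (not_le.2 hneg), zero_smul]
    exact (hasFDerivAt_const (0:ℝ) w0).congr_of_eventuallyEq hev
  · have hev : ∀ᶠ w in nhds w0, (fun w : Fin k → ℝ => max (w ⬝ᵥ h) 0) w = (fun w => w ⬝ᵥ h) w := by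
      filter_upwards [continuousAt_const.eventually_lt (hcont.continuousAt) hpos] with w hw
      simp [max_eq_left hw.le]
    rw [if_pos hpos.le, one_smul]
    exact (hasFDerivAt_dot h w0).congr_of_eventuallyEq hev


/-- For the scalar-output network `h(x) = g(W h_K(x))` with `W = c·𝟙ᵀ`
(`c > 0`) and tail weights `W_j = a_j I_j` for `j > i` (`a_j > 0`), the empirical loss
`L(w) = (1/m) ∑_{x∈D} f(g(u_w(x)))`, viewed as a function of the `t`-th row `w` of `W_i`,
has gradient `(c ∏_{j>i} a_j / m) ∑_{x∈D} (f∘g)'(u(x))·𝟙[w·h_{i-1}(x) ≥ 0]·h_{i-1}(x)ᵀ`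
when `t` is below all downstream widths (at points where no `w·h_{i-1}(x)` vanishes), and
gradient `0` when `t` exceeds some downstream width. -/
theorem loss_gradient_formula (K : ℕ) (n : ℕ → ℕ) (hn : ∀ j, 0 < n j)
    (s a : ℕ → ℝ) (i : ℕ) (hi : i + 1 < K)
    (ha : ∀ j, i < j → j < K → 0 < a j ∧ a j ≤ s j)
    (c : ℝ) (hc : 0 < c)
    (W : (j : ℕ) → Matrix (Fin (n (j + 1))) (Fin (n j)) ℝ)
    (hW : ∀ j, i < j → j < K →
      W j = Matrix.of fun (p : Fin (n (j + 1))) (q : Fin (n j)) =>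
        if (p : ℕ) = (q : ℕ) then a j else 0)
    (t : Fin (n (i + 1)))
    (D : Finset (Fin (n 0) → ℝ))
    (f g : ℝ → ℝ) (d : ℝ → ℝ)
    (hd : ∀ v0 : ℝ, HasDerivAt (fun v => f (g v)) (d v0) v0)
    (H : (Fin (n i) → ℝ) → (j : ℕ) → (Fin (n 0) → ℝ) → (Fin (n j) → ℝ))
    (hH0 : ∀ w x, H w 0 x = x)
    (hHrec : ∀ w j, j ≠ i → ∀ x, H w (j + 1) x = relu ((W j).mulVec (H w j x)))
    (hHi : ∀ w x, H w (i + 1) x = relu ((Matrix.updateRow (W i) t w).mulVec (H w i x)))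
    (u : (Fin (n i) → ℝ) → (Fin (n 0) → ℝ) → ℝ)
    (hu : ∀ w x, u w x = c * ∑ k, H w K x k)
    (ρ : (Fin (n i) → ℝ) → ℝ)
    (hρ : ∀ w, ρ w = (D.card : ℝ)⁻¹ * ∑ x ∈ D, f (g (u w x))) :
    ∀ w0 : Fin (n i) → ℝ,
      ((∀ x ∈ D, w0 ⬝ᵥ H w0 i x ≠ 0) →
        (∀ j, i + 1 < j → j ≤ K → (t : ℕ) < n j) →
        HasFDerivAt ρ
          (LinearMap.toContinuousLinearMap
            (∑ q : Fin (n i),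
              ((c * ∏ j ∈ Finset.Ioo i K, a j) * (D.card : ℝ)⁻¹ *
                  ∑ x ∈ D, d (u w0 x) *
                    (if 0 ≤ w0 ⬝ᵥ H w0 i x then (1 : ℝ) else 0) * H w0 i x q) •
                (LinearMap.proj q : ((Fin (n i)) → ℝ) →ₗ[ℝ] ℝ))) w0) ∧
      ((∃ j, i + 1 < j ∧ j ≤ K ∧ n j ≤ (t : ℕ)) →
        HasFDerivAt ρ (0 : (Fin (n i) → ℝ) →L[ℝ] ℝ) w0) := by
  intro w0
  classical
  have hapos : ∀ l, i < l → l < K → 0 < a l := fun l h1 h2 => (ha l h1 h2).1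
  -- layers up to i don't depend on w
  have Hconst : ∀ j, j ≤ i → ∀ w x, H w j x = H w0 j x := by
    intro j
    induction j with
    | zero => intro _ w x; rw [hH0, hH0]
    | succ j ih =>
        intro hj w x
        have hji : j ≠ i := by omega
        rw [hHrec w j hji, hHrec w0 j hji, ih (by omega)]
  have Hi1 : ∀ w x (q : Fin (n (i+1))),
      H w (i+1) x q = max ((if q = t then w else W i q) ⬝ᵥ H w0 i x) 0 := by
    intro w x q
    rw [hHi, Hconst i le_rfl w x]
    by_cases hq : q = t <;>
      simp [relu, mulVec, hq, Matrix.updateRow_self, Matrix.updateRow_ne]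
  have Hnonneg : ∀ w x (q : Fin (n (i+1))), 0 ≤ H w (i+1) x q := by
    intro w x q; rw [hHi]; exact le_max_right _ _
  obtain ⟨Gv, hGv⟩ : ∃ Gv : (Fin (n i) → ℝ) → (Fin (n 0) → ℝ) → ℕ → ℝ,
      ∀ w x k, Gv w x k = if h : k < n (i+1) then H w (i+1) x ⟨k, h⟩ else 0 :=
    ⟨_, fun _ _ _ => rfl⟩
  have Gnonneg : ∀ w x k, 0 ≤ Gv w x k := by
    intro w x k; rw [hGv]; split
    · exact Hnonneg _ _ _
    · exact le_refl 0
  have Gconst : ∀ w x k, (∀ h : k < n (i+1), (⟨k, h⟩ : Fin (n (i+1))) ≠ t) →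
      Gv w x k = Gv w0 x k := by
    intro w x k hk; rw [hGv, hGv]
    split
    · next h => rw [Hi1 w x ⟨k, h⟩, Hi1 w0 x ⟨k, h⟩, if_neg (hk h), if_neg (hk h)]
    · rfl
  have tail : ∀ j, i+1 ≤ j → j ≤ K → ∀ w x (p : Fin (n j)),
      H w j x p = (∏ l ∈ Finset.Ioo i j, a l) *
        (if ∀ l, i+1 < l → l ≤ j → (p:ℕ) < n l then Gv w x (p:ℕ) else 0) := by
    intro j hj1
    induction j, hj1 using Nat.le_induction with
    | base =>
        intro _ w x p
        have hcond : ∀ l, i+1 < l → l ≤ i+1 → (p:ℕ) < n l := by intro l h1 h2; omega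
        have hempty : Finset.Ioo i (i+1) = ∅ := by
          apply Finset.eq_empty_of_forall_notMem; intro l hl
          simp [Finset.mem_Ioo] at hl; omega
        rw [if_pos hcond, hempty, Finset.prod_empty, one_mul, hGv, dif_pos p.isLt]
    | succ j hj ih =>
        intro hjK w x p
        have hij : i < j := by omega
        have hjK' : j < K := by omega
        rw [hHrec w j (by omega)]
        have hmv : (W j).mulVec (H w j x) p =
            if hp : (p:ℕ) < n j then a j * H w j x ⟨(p:ℕ), hp⟩ else 0 := by
          rw [hW j hij hjK']
          simp only [mulVec, dotProduct, Matrix.of_apply]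
          split
          · next hp =>
              rw [Finset.sum_eq_single (⟨(p:ℕ), hp⟩ : Fin (n j))]
              · simp
              · intro b _ hb
                have hne : (p:ℕ) ≠ (b:ℕ) := by
                  intro h; exact hb (Fin.ext h.symm)
                simp [hne]
              · intro hmem; exact absurd (Finset.mem_univ _) hmem
          · next hp =>
              apply Finset.sum_eq_zero; intro q _
              have hne : (p:ℕ) ≠ (q:ℕ) := by have := q.isLt; omega
              simp [hne]
        show max ((W j).mulVec (H w j x) p) 0 = _
        rw [hmv]
        have hprod : ∏ l ∈ Finset.Ioo i (j+1), a l = a j * ∏ l ∈ Finset.Ioo i j, a l := by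
          have hins : Finset.Ioo i (j+1) = insert j (Finset.Ioo i j) := by
            ext l; simp [Finset.mem_Ioo, Finset.mem_insert]; omega
          rw [hins, Finset.prod_insert (by simp)]
        split
        · next hp =>
            rw [ih (by omega) w x ⟨(p:ℕ), hp⟩]
            by_cases hcond : ∀ l, i+1 < l → l ≤ j → (p:ℕ) < n l
            · have hcond' : ∀ l, i+1 < l → l ≤ j+1 → (p:ℕ) < n l := by
                intro l h1 h2
                by_cases hl : l ≤ j
                · exact hcond l h1 hl
                · have : l = j+1 := by omega
                  subst this; exact p.isLt
              rw [if_pos hcond, if_pos hcond']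
              have h1 : (0:ℝ) ≤ a j * ((∏ l ∈ Finset.Ioo i j, a l) * Gv w x (p:ℕ)) := by
                apply mul_nonneg (hapos j hij hjK').le
                apply mul_nonneg _ (Gnonneg w x (p:ℕ))
                apply Finset.prod_nonneg
                intro l hl
                simp [Finset.mem_Ioo] at hl
                exact (hapos l hl.1 (by omega)).le
              rw [max_eq_left h1, hprod]; ring
            · have hcond' : ¬ ∀ l, i+1 < l → l ≤ j+1 → (p:ℕ) < n l := by
                intro hcc; exact hcond fun l h1 h2 => hcc l h1 (by omega)
              rw [if_neg hcond, if_neg hcond']; simp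
        · next hp =>
            have hz : (if ∀ l, i+1 < l → l ≤ j+1 → (p:ℕ) < n l then Gv w x (p:ℕ) else 0) = 0 := by
              by_cases hij2 : i+1 < j
              · rw [if_neg]; intro hcc; exact hp (hcc j hij2 (by omega))
              · have hji : j = i+1 := by omega
                split
                · rw [hGv, dif_neg (by rw [← hji]; exact hp)]
                · rfl
            rw [hz, mul_zero]; simp
  constructor
  · -- good case
    intro hx0 htg
    have htK : (t:ℕ) < n K := htg K hi le_rfl
    obtain ⟨C, hC⟩ : ∃ C : (Fin (n 0) → ℝ) → ℝ, ∀ x, C x =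
        ∑ k ∈ Finset.univ.erase (⟨(t:ℕ), htK⟩ : Fin (n K)),
          (if ∀ l, i+1 < l → l ≤ K → (k:ℕ) < n l then Gv w0 x (k:ℕ) else 0) :=
      ⟨_, fun _ => rfl⟩
    have usum : ∀ w x, u w x =
        c * ((∏ l ∈ Finset.Ioo i K, a l) * (max (w ⬝ᵥ H w0 i x) 0 + C x)) := by
      intro w x
      rw [hu]
      have hterm : ∀ k : Fin (n K), H w K x k = (∏ l ∈ Finset.Ioo i K, a l) *
          (if ∀ l, i+1 < l → l ≤ K → (k:ℕ) < n l then Gv w x (k:ℕ) else 0) :=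
        fun k => tail K (by omega) le_rfl w x k
      rw [Finset.sum_congr rfl fun k _ => hterm k, ← Finset.mul_sum]
      congr 1
      congr 1
      rw [← Finset.add_sum_erase _ _ (Finset.mem_univ (⟨(t:ℕ), htK⟩ : Fin (n K)))]
      congr 1
      · have hcond : ∀ l, i+1 < l → l ≤ K → (((⟨(t:ℕ), htK⟩ : Fin (n K))):ℕ) < n l :=
          fun l h1 h2 => htg l h1 h2
        rw [if_pos hcond, hGv, dif_pos t.isLt]
        have heta : (⟨(t:ℕ), t.isLt⟩ : Fin (n (i+1))) = t := rfl
        rw [heta, Hi1 w x t, if_pos rfl]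
      · rw [hC]
        apply Finset.sum_congr rfl; intro k hk
        have hkt : ∀ h : (k:ℕ) < n (i+1), (⟨(k:ℕ), h⟩ : Fin (n (i+1))) ≠ t := by
          intro h heq
          apply (Finset.mem_erase.1 hk).1
          apply Fin.ext
          simpa using congrArg Fin.val heq
        rw [Gconst w x (k:ℕ) hkt]
    have hderiv : ∀ x ∈ D, HasFDerivAt
        (fun w => f (g (c * ((∏ l ∈ Finset.Ioo i K, a l) * (max (w ⬝ᵥ H w0 i x) 0 + C x)))))
        (d (u w0 x) • (c • ((∏ l ∈ Finset.Ioo i K, a l) •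
          ((if 0 ≤ w0 ⬝ᵥ H w0 i x then (1:ℝ) else 0) • dotCLM (H w0 i x))))) w0 := by
      intro x hx
      have h1 := (((hasFDerivAt_maxdot (H w0 i x) w0 (hx0 x hx)).add_const
        (C x)).const_mul (∏ l ∈ Finset.Ioo i K, a l)).const_mul c
      have hpt : c * ((∏ l ∈ Finset.Ioo i K, a l) * (max (w0 ⬝ᵥ H w0 i x) 0 + C x)) = u w0 x :=
        (usum w0 x).symm
      have hd' : HasDerivAt (fun v => f (g v)) (d (u w0 x))
          (c * ((∏ l ∈ Finset.Ioo i K, a l) * (max (w0 ⬝ᵥ H w0 i x) 0 + C x))) := by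
        rw [hpt]; exact hd _
      have := hd'.comp_hasFDerivAt w0 h1; exact this
    have hsum := HasFDerivAt.fun_sum hderiv
    have hfinal := hsum.const_mul ((D.card:ℝ)⁻¹)
    have hρ2 : ρ = fun w => (D.card:ℝ)⁻¹ * ∑ x ∈ D,
        f (g (c * ((∏ l ∈ Finset.Ioo i K, a l) * (max (w ⬝ᵥ H w0 i x) 0 + C x)))) := by
      funext w; rw [hρ]; congr 1
      apply Finset.sum_congr rfl; intro x _; rw [usum]
    rw [hρ2]
    refine hfinal.congr_fderiv ?_; symm
    apply ContinuousLinearMap.ext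
    intro v
    simp only [LinearMap.coe_toContinuousLinearMap', LinearMap.coe_sum, Finset.sum_apply,
      LinearMap.smul_apply, LinearMap.proj_apply, smul_eq_mul,
      ContinuousLinearMap.coe_smul', Pi.smul_apply, ContinuousLinearMap.coe_sum',
      dotCLM_apply]
    simp only [Finset.mul_sum, Finset.sum_mul]
    rw [Finset.sum_comm]
    apply Finset.sum_congr rfl; intro x _
    apply Finset.sum_congr rfl; intro q _
    ring
  · -- degenerate case
    rintro ⟨j, hj1, hj2, hj3⟩
    have hconst : ∀ w x, u w x = u w0 x := by
      intro w x; rw [hu, hu]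
      congr 1
      apply Finset.sum_congr rfl; intro k _
      rw [tail K (by omega) le_rfl w x k, tail K (by omega) le_rfl w0 x k]
      by_cases hkt : (k:ℕ) = (t:ℕ)
      · rw [if_neg, if_neg]
        · intro hcc; have := hcc j hj1 hj2; omega
        · intro hcc; have := hcc j hj1 hj2; omega
      · rw [Gconst w x (k:ℕ) (by intro h heq; exact hkt (by simpa using congrArg Fin.val heq))]
    have hρc : ρ = fun _ => ρ w0 := by
      funext w; rw [hρ, hρ]
      congr 1
      apply Finset.sum_congr rfl; intro x _; rw [hconst w x]
    rw [hρc]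
    exact hasFDerivAt_const _ _
end
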